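/- Let R be a commutative ring with unity, let n ≥ 1, and let σ₁, …, σₙ be permutations of Fin n such that the subgroup of the symmetric group on Fin n generated by σ₁, …, σₙ does NOT act transitively on Fin n. Then the determinant of the n×n matrix over the multivariate polynomial ring R[x₀, …, x_{n-1}] whose (i,j) entry is the variable x_{σᵢ(j)} is zero. -/

import Mathlib

open Classical in
theorem det_zero_int (n : ℕ)
    (σ : Fin n → Equiv.Perm (Fin n))
    (hintrans : ¬ ∀ a b : Fin n,
      ∃ g ∈ Subgroup.closure (Set.range σ), g a = b) :
    Matrix.det
      (Matrix.of fun i j => (MvPolynomial.X (σ i j) : MvPolynomial (Fin n) ℤ)) = 0 := by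
  push_neg at hintrans
  obtain ⟨a, b, hab⟩ := hintrans
  set G := Subgroup.closure (Set.range σ) with hG
  set O : Finset (Fin n) := Finset.univ.filter (fun k => ∃ g ∈ G, g a = k) with hOdef
  have memO : ∀ k, k ∈ O ↔ ∃ g ∈ G, g a = k := by
    intro k; simp [hOdef]
  have haO : a ∈ O := (memO a).mpr ⟨1, one_mem G, rfl⟩
  have hbO : b ∉ O := by
    intro hb
    obtain ⟨g, hg, hga⟩ := (memO b).mp hb
    exact hab g hg hga
  have hσG : ∀ i, σ i ∈ G := fun i => Subgroup.subset_closure ⟨i, rfl⟩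
  have hO : ∀ i k, σ i k ∈ O ↔ k ∈ O := by
    intro i k
    constructor
    · intro h
      obtain ⟨g, hg, hga⟩ := (memO _).mp h
      refine (memO k).mpr ⟨(σ i)⁻¹ * g, mul_mem (inv_mem (hσG i)) hg, ?_⟩
      simp [Equiv.Perm.mul_apply, hga]
    · intro h
      obtain ⟨g, hg, hga⟩ := (memO k).mp h
      exact (memO _).mpr ⟨σ i * g, mul_mem (hσG i) hg, by simp [Equiv.Perm.mul_apply, hga]⟩
  set S : MvPolynomial (Fin n) ℤ := ∑ k ∈ O, MvPolynomial.X k with hS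
  set S' : MvPolynomial (Fin n) ℤ := ∑ k ∈ Oᶜ, MvPolynomial.X k with hS'
  set v : Fin n → MvPolynomial (Fin n) ℤ := fun j => if j ∈ O then S' else -S with hv
  have hS'ne : S' ≠ 0 := by
    intro h
    have := congrArg (MvPolynomial.eval (fun k => if k = b then (1:ℤ) else 0)) h
    simp only [hS', map_sum, MvPolynomial.eval_X, map_zero] at this
    rw [Finset.sum_ite_eq' Oᶜ b (fun _ => (1:ℤ))] at this
    simp [Finset.mem_compl, hbO] at this
  have hvne : v ≠ 0 := by
    intro h
    apply hS'ne
    have := congrFun h a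
    simpa [hv, haO] using this
  have himg : ∀ i, O.image (σ i) = O := by
    intro i
    ext k
    simp only [Finset.mem_image]
    constructor
    · rintro ⟨j, hj, rfl⟩; exact (hO i j).mpr hj
    · intro hk
      refine ⟨(σ i)⁻¹ k, ?_, Equiv.apply_symm_apply _ _⟩
      rw [← hO i]
      simpa using hk
  have himgc : ∀ i, Oᶜ.image (σ i) = Oᶜ := by
    intro i
    ext k
    simp only [Finset.mem_image, Finset.mem_compl]
    constructor
    · rintro ⟨j, hj, rfl⟩; exact fun h => hj ((hO i j).mp h)
    · intro hk
      refine ⟨(σ i)⁻¹ k, ?_, Equiv.apply_symm_apply _ _⟩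
      intro h
      exact hk (by rw [← hO i] at *; simpa using (hO i _).mpr h)
  have hsumO : ∀ i, ∑ j ∈ O, (MvPolynomial.X (σ i j) : MvPolynomial (Fin n) ℤ) = S := by
    intro i
    rw [hS]
    conv_rhs => rw [← himg i]
    exact (Finset.sum_image (fun x _ y _ h => (σ i).injective h)).symm
  have hsumOc : ∀ i, ∑ j ∈ Oᶜ, (MvPolynomial.X (σ i j) : MvPolynomial (Fin n) ℤ) = S' := by
    intro i
    rw [hS']
    conv_rhs => rw [← himgc i]
    exact (Finset.sum_image (fun x _ y _ h => (σ i).injective h)).symm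
  have hmv : (Matrix.of fun i j => (MvPolynomial.X (σ i j) : MvPolynomial (Fin n) ℤ)).mulVec v = 0 := by
    funext i
    simp only [Matrix.mulVec, dotProduct, Matrix.of_apply, Pi.zero_apply]
    rw [← Finset.sum_add_sum_compl O]
    have h1 : ∀ j ∈ O, (MvPolynomial.X (σ i j) : MvPolynomial (Fin n) ℤ) * v j = MvPolynomial.X (σ i j) * S' := by
      intro j hj; rw [hv]; simp [hj]
    have h2 : ∀ j ∈ Oᶜ, (MvPolynomial.X (σ i j) : MvPolynomial (Fin n) ℤ) * v j = MvPolynomial.X (σ i j) * (-S) := by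
      intro j hj; rw [hv]; simp only [Finset.mem_compl] at hj; simp [hj]
    rw [Finset.sum_congr rfl h1, Finset.sum_congr rfl h2, ← Finset.sum_mul, ← Finset.sum_mul,
      hsumO i, hsumOc i]
    ring
  exact (Matrix.exists_mulVec_eq_zero_iff.mp ⟨v, hvne, hmv⟩)

/-- If the subgroup generated by the rows (permutations) acts intransitively,
the determinant of the matrix of variables `x_{σᵢ(j)}` is zero. -/
theorem det_zero_of_intransitive (R : Type*) [CommRing R] (n : ℕ) (hn : 1 ≤ n)
    (σ : Fin n → Equiv.Perm (Fin n))
    (hintrans : ¬ ∀ a b : Fin n,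
      ∃ g ∈ Subgroup.closure (Set.range σ), g a = b) :
    Matrix.det
      (Matrix.of fun i j => (MvPolynomial.X (σ i j) : MvPolynomial (Fin n) R)) = 0 := by
  have h := det_zero_int n σ hintrans
  have := congrArg (MvPolynomial.map (Int.castRingHom R)) h
  rw [map_zero, RingHom.map_det] at this
  convert this using 2
  ext i j
  simp [RingHom.mapMatrix_apply, Matrix.map]
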